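/- Let I be the class of well-tempered scoring games G with gap_0(G) = 0. If G, H ∈ I then G - G ≈ 0, and the following are equivalent: (a) G ≳ H; (b) R(G - H) ≥ 0 and π(G) = π(H); (c) L(H - G) ≤ 0 and π(G) = π(H). -/

import Mathlib

/-- Well-tempered scoring game trees: an integer (final score) or a position
with lists of Left and Right options. -/
inductive WT : Type where
  | int : ℤ → WT
  | node : List WT → List WT → WT

namespace WT

/-- Left options. -/
def lopts : WT → List WT
  | int _ => []
  | node L _ => L

/-- Right options. -/
def ropts : WT → List WT
  | int _ => []
  | node _ R => R

theorem sizeOf_lt_of_mem_lopts : ∀ {G g : WT}, g ∈ G.lopts → sizeOf g < sizeOf G := by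
  intro G g h
  cases G with
  | int n => simp [lopts] at h
  | node L R =>
    simp only [lopts] at h
    have h1 := List.sizeOf_lt_of_mem h
    have h2 : sizeOf (WT.node L R) = 1 + sizeOf L + sizeOf R := by simp
    omega

theorem sizeOf_lt_of_mem_ropts : ∀ {G g : WT}, g ∈ G.ropts → sizeOf g < sizeOf G := by
  intro G g h
  cases G with
  | int n => simp [ropts] at h
  | node L R =>
    simp only [ropts] at h
    have h1 := List.sizeOf_lt_of_mem h
    have h2 : sizeOf (WT.node L R) = 1 + sizeOf L + sizeOf R := by simp
    omega

/-- Disjunctive sum of two games. -/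
def add (G H : WT) : WT :=
  match G, H with
  | int m, int n => int (m + n)
  | G, H =>
    node ((G.lopts.attach.map fun g => add g.1 H) ++ (H.lopts.attach.map fun h => add G h.1))
         ((G.ropts.attach.map fun g => add g.1 H) ++ (H.ropts.attach.map fun h => add G h.1))
termination_by sizeOf G + sizeOf H
decreasing_by
  all_goals
    first
      | (have := sizeOf_lt_of_mem_lopts g.2; omega)
      | (have := sizeOf_lt_of_mem_lopts h.2; omega)
      | (have := sizeOf_lt_of_mem_ropts g.2; omega)
      | (have := sizeOf_lt_of_mem_ropts h.2; omega)

/-- Negation of a game: swap players and negate scores. -/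
def neg : WT → WT
  | int n => int (-n)
  | node L R =>
    node ((WT.node L R).ropts.attach.map fun g => neg g.1)
         ((WT.node L R).lopts.attach.map fun g => neg g.1)
termination_by G => sizeOf G
decreasing_by
  all_goals
    first
      | exact sizeOf_lt_of_mem_lopts g.2
      | exact sizeOf_lt_of_mem_ropts g.2

def lmax : List ℤ → ℤ
  | [] => 0
  | x :: xs => xs.foldl max x

def lmin : List ℤ → ℤ
  | [] => 0
  | x :: xs => xs.foldl min x

/-- The pair (left outcome, right outcome). -/
def out : WT → ℤ × ℤ
  | int n => (n, n)
  | node L R =>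
    (lmax ((WT.node L R).lopts.attach.map fun g => (out g.1).2),
     lmin ((WT.node L R).ropts.attach.map fun g => (out g.1).1))
termination_by G => sizeOf G
decreasing_by
  all_goals
    first
      | exact sizeOf_lt_of_mem_lopts g.2
      | exact sizeOf_lt_of_mem_ropts g.2

/-- Left outcome L(G): optimal score when Left moves first. -/
def Lout (G : WT) : ℤ := G.out.1

/-- Right outcome R(G): optimal score when Right moves first. -/
def Rout (G : WT) : ℤ := G.out.2

/-- `IsWT G p` : `G` is a well-tempered game of parity `p`
(`false` = even-tempered, `true` = odd-tempered). -/
inductive IsWT : WT → Bool → Prop where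
  | int (n : ℤ) : IsWT (WT.int n) false
  | node {L R : List WT} {p : Bool} (hL : L ≠ []) (hR : R ≠ [])
      (hLp : ∀ g ∈ L, IsWT g p) (hRp : ∀ g ∈ R, IsWT g p) :
      IsWT (WT.node L R) (!p)

/-- `G` is a well-tempered game (of some parity). -/
def Wt (G : WT) : Prop := ∃ p, IsWT G p

/-- Parity, computed structurally (`false` = even-tempered, `true` = odd-tempered;
agrees with `IsWT` on well-tempered games). -/
def par : WT → Bool
  | int _ => false
  | node [] _ => true
  | node (g :: _) _ => !(par g)

/-- Final score under optimal play when Left moves last. -/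
def Lf (G : WT) : ℤ := if G.par then G.Lout else G.Rout

/-- Final score under optimal play when Right moves last. -/
def Rf (G : WT) : ℤ := if G.par then G.Rout else G.Lout

/-- `G ≲ H` : for every well-tempered `X`, `L(G+X) ≤ L(H+X)` and `R(G+X) ≤ R(H+X)`. -/
def Le (G H : WT) : Prop :=
  ∀ X : WT, X.Wt → (G.add X).Lout ≤ (H.add X).Lout ∧ (G.add X).Rout ≤ (H.add X).Rout

/-- `G ≳ H`. -/
def Ge (G H : WT) : Prop := Le H G

/-- `G ≈ H` : equivalence of scoring games. -/
def Equiv (G H : WT) : Prop :=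
  ∀ X : WT, X.Wt → (G.add X).Lout = (H.add X).Lout ∧ (G.add X).Rout = (H.add X).Rout

/-- `G` and `H` are well-tempered with the same parity. -/
def SamePar (G H : WT) : Prop := ∃ p, IsWT G p ∧ IsWT H p

/-- `G` takes values in `S`: every integer subgame lies in `S`. -/
inductive Valued (S : Set ℤ) : WT → Prop where
  | int {n : ℤ} : n ∈ S → Valued S (WT.int n)
  | node {L R : List WT} : (∀ g ∈ L, Valued S g) → (∀ g ∈ R, Valued S g) →
      Valued S (WT.node L R)

/-- `Subgame H G` : `H` is a subgame of `G`. -/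
inductive Subgame : WT → WT → Prop where
  | refl (G : WT) : Subgame G G
  | left {H G' : WT} {L R : List WT} : G' ∈ L → Subgame H G' → Subgame H (WT.node L R)
  | right {H G' : WT} {L R : List WT} : G' ∈ R → Subgame H G' → Subgame H (WT.node L R)

/-- `gap G p` : supremum of `R(H) - L(H)` over subgames `H` of `G` of parity `p`
(as an element of `WithBot ℤ`; the supremum of the empty set is `⊥ = -∞`). -/
noncomputable def gap (G : WT) (p : Bool) : WithBot ℤ :=
  sSup {x : WithBot ℤ | ∃ H : WT, Subgame H G ∧ IsWT H p ∧ x = ((H.Rout - H.Lout : ℤ) : WithBot ℤ)}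

/-- Heating by `t`. -/
def heat (t : ℤ) : WT → WT
  | int n => int n
  | node L R =>
    node ((WT.node L R).lopts.attach.map fun g => (WT.int t).add (heat t g.1))
         ((WT.node L R).ropts.attach.map fun g => (WT.int (-t)).add (heat t g.1))
termination_by G => sizeOf G
decreasing_by
  all_goals
    first
      | exact sizeOf_lt_of_mem_lopts g.2
      | exact sizeOf_lt_of_mem_ropts g.2

/-! ### lmax / lmin lemmas -/

theorem foldl_max_le {xs : List ℤ} {x m : ℤ} (hx : x ≤ m) (h : ∀ a ∈ xs, a ≤ m) :
    xs.foldl max x ≤ m := by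
  induction xs generalizing x with
  | nil => exact hx
  | cons y ys ih =>
    exact ih (max_le hx (h y (by simp))) (fun a ha => h a (by simp [ha]))

theorem le_foldl_max {xs : List ℤ} (x : ℤ) : x ≤ xs.foldl max x := by
  induction xs generalizing x with
  | nil => exact le_rfl
  | cons y ys ih => exact le_trans (le_max_left x y) (ih _)

theorem le_foldl_max_of_mem {xs : List ℤ} {a : ℤ} (x : ℤ) (h : a ∈ xs) :
    a ≤ xs.foldl max x := by
  induction xs generalizing x with
  | nil => simp at h
  | cons y ys ih =>
    rcases List.mem_cons.1 h with rfl | h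
    · exact le_trans (le_max_right x a) (le_foldl_max _)
    · exact ih _ h

theorem le_lmax {l : List ℤ} {a : ℤ} (h : a ∈ l) : a ≤ lmax l := by
  cases l with
  | nil => simp at h
  | cons x xs =>
    rcases List.mem_cons.1 h with rfl | h
    · exact le_foldl_max _
    · exact le_foldl_max_of_mem _ h

theorem lmax_le {l : List ℤ} {m : ℤ} (hne : l ≠ []) (h : ∀ a ∈ l, a ≤ m) : lmax l ≤ m := by
  cases l with
  | nil => exact absurd rfl hne
  | cons x xs => exact foldl_max_le (h x (by simp)) (fun a ha => h a (by simp [ha]))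

theorem foldl_max_mem {xs : List ℤ} (x : ℤ) : xs.foldl max x ∈ x :: xs := by
  induction xs generalizing x with
  | nil => simp [List.foldl]
  | cons y ys ih =>
    have := ih (max x y)
    show List.foldl max (max x y) ys ∈ x :: y :: ys
    rcases List.mem_cons.1 this with h | h
    · rcases max_choice x y with h' | h' <;> rw [h, h'] <;> simp
    · simp [h]

theorem lmax_mem {l : List ℤ} (hne : l ≠ []) : lmax l ∈ l := by
  cases l with
  | nil => exact absurd rfl hne
  | cons x xs => exact foldl_max_mem x

theorem foldl_min_ge {xs : List ℤ} {x m : ℤ} (hx : m ≤ x) (h : ∀ a ∈ xs, m ≤ a) :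
    m ≤ xs.foldl min x := by
  induction xs generalizing x with
  | nil => exact hx
  | cons y ys ih =>
    exact ih (le_min hx (h y (by simp))) (fun a ha => h a (by simp [ha]))

theorem foldl_min_le {xs : List ℤ} (x : ℤ) : xs.foldl min x ≤ x := by
  induction xs generalizing x with
  | nil => exact le_rfl
  | cons y ys ih => exact le_trans (ih _) (min_le_left x y)

theorem foldl_min_le_of_mem {xs : List ℤ} {a : ℤ} (x : ℤ) (h : a ∈ xs) :
    xs.foldl min x ≤ a := by
  induction xs generalizing x with
  | nil => simp at h
  | cons y ys ih =>
    rcases List.mem_cons.1 h with rfl | h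
    · show List.foldl min (min x a) ys ≤ a
      exact le_trans (foldl_min_le _) (min_le_right x a)
    · exact ih _ h

theorem lmin_le {l : List ℤ} {a : ℤ} (h : a ∈ l) : lmin l ≤ a := by
  cases l with
  | nil => simp at h
  | cons x xs =>
    rcases List.mem_cons.1 h with rfl | h
    · exact foldl_min_le _
    · exact foldl_min_le_of_mem _ h

theorem le_lmin {l : List ℤ} {m : ℤ} (hne : l ≠ []) (h : ∀ a ∈ l, m ≤ a) : m ≤ lmin l := by
  cases l with
  | nil => exact absurd rfl hne
  | cons x xs => exact foldl_min_ge (h x (by simp)) (fun a ha => h a (by simp [ha]))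

theorem foldl_min_mem {xs : List ℤ} (x : ℤ) : xs.foldl min x ∈ x :: xs := by
  induction xs generalizing x with
  | nil => simp [List.foldl]
  | cons y ys ih =>
    have := ih (min x y)
    show List.foldl min (min x y) ys ∈ x :: y :: ys
    rcases List.mem_cons.1 this with h | h
    · rcases min_choice x y with h' | h' <;> rw [h, h'] <;> simp
    · simp [h]

theorem lmin_mem {l : List ℤ} (hne : l ≠ []) : lmin l ∈ l := by
  cases l with
  | nil => exact absurd rfl hne
  | cons x xs => exact foldl_min_mem x

theorem lmax_eq_of {l₁ l₂ : List ℤ} (hne : l₁ = [] ↔ l₂ = [])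
    (h₁ : ∀ a ∈ l₁, ∃ b ∈ l₂, a ≤ b) (h₂ : ∀ b ∈ l₂, ∃ a ∈ l₁, b ≤ a) :
    lmax l₁ = lmax l₂ := by
  rcases eq_or_ne l₁ [] with rfl | hn1
  · rw [hne.1 rfl]
  · have hn2 : l₂ ≠ [] := fun h => hn1 (hne.2 h)
    apply le_antisymm
    · refine lmax_le hn1 (fun a ha => ?_)
      obtain ⟨b, hb, hab⟩ := h₁ a ha
      exact le_trans hab (le_lmax hb)
    · refine lmax_le hn2 (fun a ha => ?_)
      obtain ⟨b, hb, hab⟩ := h₂ a ha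
      exact le_trans hab (le_lmax hb)

theorem lmin_eq_of {l₁ l₂ : List ℤ} (hne : l₁ = [] ↔ l₂ = [])
    (h₁ : ∀ a ∈ l₁, ∃ b ∈ l₂, b ≤ a) (h₂ : ∀ b ∈ l₂, ∃ a ∈ l₁, a ≤ b) :
    lmin l₁ = lmin l₂ := by
  rcases eq_or_ne l₁ [] with rfl | hn1
  · rw [hne.1 rfl]
  · have hn2 : l₂ ≠ [] := fun h => hn1 (hne.2 h)
    apply le_antisymm
    · refine le_lmin hn2 (fun b hb => ?_)
      obtain ⟨a, ha, hab⟩ := h₂ b hb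
      exact le_trans (lmin_le ha) hab
    · refine le_lmin hn1 (fun a ha => ?_)
      obtain ⟨b, hb, hab⟩ := h₁ a ha
      exact le_trans (lmin_le hb) hab

/-! ### structural lemmas -/

theorem add_int_int (m n : ℤ) : (int m).add (int n) = int (m + n) := by simp [add]

theorem add_def' (G H : WT) (h : ∀ m n : ℤ, G = int m → H = int n → False) :
    G.add H = node (G.lopts.map (fun g => g.add H) ++ H.lopts.map (fun x => G.add x))
                   (G.ropts.map (fun g => g.add H) ++ H.ropts.map (fun x => G.add x)) := by
  rw [add]
  · simp [List.attach_map_val]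
  · exact h

theorem lopts_add (G H : WT) :
    (G.add H).lopts = G.lopts.map (fun g => g.add H) ++ H.lopts.map (fun x => G.add x) := by
  cases G with
  | int m =>
    cases H with
    | int n => simp [add_int_int, lopts]
    | node L R => rw [add_def' _ _ (by intro _ _ _ h; cases h)]; rfl
  | node L R => rw [add_def' _ _ (by intro _ _ h; cases h)]; rfl

theorem ropts_add (G H : WT) :
    (G.add H).ropts = G.ropts.map (fun g => g.add H) ++ H.ropts.map (fun x => G.add x) := by
  cases G with
  | int m =>
    cases H with
    | int n => simp [add_int_int, ropts]
    | node L R => rw [add_def' _ _ (by intro _ _ _ h; cases h)]; rfl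
  | node L R => rw [add_def' _ _ (by intro _ _ h; cases h)]; rfl

theorem add_is_node (G H : WT) (h : ∀ m n : ℤ, G = int m → H = int n → False) :
    G.add H = node (G.add H).lopts (G.add H).ropts := by
  rw [add_def' G H h]; rfl

theorem neg_int (n : ℤ) : (int n).neg = int (-n) := by simp [neg]

theorem neg_node (L R : List WT) : (node L R).neg = node (R.map neg) (L.map neg) := by
  rw [neg]; simp [lopts, ropts, List.attach_map_val]

theorem lopts_neg (G : WT) : G.neg.lopts = G.ropts.map neg := by
  cases G <;> simp [neg_int, neg_node, lopts, ropts]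

theorem ropts_neg (G : WT) : G.neg.ropts = G.lopts.map neg := by
  cases G <;> simp [neg_int, neg_node, lopts, ropts]

theorem neg_neg : ∀ (G : WT), G.neg.neg = G
  | int n => by simp [neg_int]
  | node L R => by
    rw [neg_node, neg_node]
    simp only [List.map_map]
    congr 1
    · calc L.map (neg ∘ neg) = L.map id := List.map_congr_left fun g hg => neg_neg g
        _ = L := List.map_id L
    · calc R.map (neg ∘ neg) = R.map id := List.map_congr_left fun g hg => neg_neg g
        _ = R := List.map_id R
termination_by G => sizeOf G
decreasing_by
  · exact sizeOf_lt_of_mem_lopts (G := node L R) hg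
  · exact sizeOf_lt_of_mem_ropts (G := node L R) hg

theorem out_int (n : ℤ) : (int n).out = (n, n) := by simp [out]

theorem out_node (L R : List WT) :
    (node L R).out = (lmax (L.map fun g => g.out.2), lmin (R.map fun g => g.out.1)) := by
  rw [out]; simp [lopts, ropts, List.attach_map_val]

theorem Lout_int (n : ℤ) : (int n).Lout = n := by simp [Lout, out_int]
theorem Rout_int (n : ℤ) : (int n).Rout = n := by simp [Rout, out_int]

/-! ### negation and outcomes -/

theorem foldl_max_neg (xs : List ℤ) : ∀ x : ℤ,
    (xs.map (fun a => -a)).foldl max (-x) = -(xs.foldl min x) := by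
  induction xs with
  | nil => intro x; rfl
  | cons y ys ih =>
    intro x
    show (ys.map (fun a => -a)).foldl max (max (-x) (-y)) = -((y :: ys).foldl min x)
    rw [max_neg_neg, ih (min x y)]
    rfl

theorem foldl_min_neg (xs : List ℤ) : ∀ x : ℤ,
    (xs.map (fun a => -a)).foldl min (-x) = -(xs.foldl max x) := by
  induction xs with
  | nil => intro x; rfl
  | cons y ys ih =>
    intro x
    show (ys.map (fun a => -a)).foldl min (min (-x) (-y)) = -((y :: ys).foldl max x)
    rw [min_neg_neg, ih (max x y)]
    rfl

theorem lmax_map_neg (l : List ℤ) : lmax (l.map (fun x => -x)) = - lmin l := by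
  cases l with
  | nil => simp [lmax, lmin]
  | cons x xs => exact foldl_max_neg xs x

theorem lmin_map_neg (l : List ℤ) : lmin (l.map (fun x => -x)) = - lmax l := by
  cases l with
  | nil => simp [lmax, lmin]
  | cons x xs => exact foldl_min_neg xs x

theorem out_neg : ∀ (G : WT), G.neg.out = (-G.out.2, -G.out.1)
  | int n => by simp [neg_int, out_int]
  | node L R => by
    rw [neg_node, out_node, out_node]
    simp only [List.map_map, Function.comp, Prod.mk.injEq]
    constructor
    · calc lmax (R.map fun g => (neg g).out.2)
          = lmax (R.map fun g => -(g.out.1)) := by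
            exact congrArg lmax (List.map_congr_left fun g hg => by rw [out_neg g])
        _ = lmax ((R.map (fun g => g.out.1)).map (fun x => -x)) := by rw [List.map_map]; rfl
        _ = - lmin (R.map fun g => g.out.1) := lmax_map_neg _
    · calc lmin (L.map fun g => (neg g).out.1)
          = lmin (L.map fun g => -(g.out.2)) := by
            exact congrArg lmin (List.map_congr_left fun g hg => by rw [out_neg g])
        _ = lmin ((L.map (fun g => g.out.2)).map (fun x => -x)) := by rw [List.map_map]; rfl
        _ = - lmax (L.map fun g => g.out.2) := lmin_map_neg _
termination_by G => sizeOf G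
decreasing_by
  · exact sizeOf_lt_of_mem_ropts (G := node L R) hg
  · exact sizeOf_lt_of_mem_lopts (G := node L R) hg

theorem Lout_neg (G : WT) : G.neg.Lout = -G.Rout := by simp [Lout, Rout, out_neg]
theorem Rout_neg (G : WT) : G.neg.Rout = -G.Lout := by simp [Lout, Rout, out_neg]

theorem neg_add : ∀ (G H : WT), (G.add H).neg = G.neg.add H.neg
  | int m, int n => by
    rw [add_int_int, neg_int, neg_int, neg_int, add_int_int]; ring_nf
  | int m, node L R => by
    have h : ∀ m' n' : ℤ, (int m : WT) = int m' → (node L R : WT) = int n' → False := by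
      intro _ _ _ h; cases h
    have h' : ∀ m' n' : ℤ, (int m : WT).neg = int m' → (node L R : WT).neg = int n' → False := by
      rw [neg_node]; intro _ _ _ h; cases h
    rw [add_is_node _ _ h, neg_node, add_def' _ _ h']
    congr 1
    · rw [ropts_add, lopts_neg, lopts_neg, ropts]
      simp only [List.map_append, List.map_map, lopts, ropts, List.map_nil,
        List.nil_append]
      exact List.map_congr_left fun g hg => by
        have := neg_add (int m) g
        simpa using this
    · rw [lopts_add, ropts_neg, ropts_neg, lopts]
      simp only [List.map_append, List.map_map, lopts, ropts, List.map_nil,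
        List.nil_append]
      exact List.map_congr_left fun g hg => by
        have := neg_add (int m) g
        simpa using this
  | node L R, H => by
    have h : ∀ m' n' : ℤ, (node L R : WT) = int m' → H = int n' → False := by
      intro _ _ h; cases h
    have h' : ∀ m' n' : ℤ, (node L R : WT).neg = int m' → H.neg = int n' → False := by
      rw [neg_node]; intro _ _ h; cases h
    rw [add_is_node _ _ h, neg_node, add_def' _ _ h']
    congr 1
    · rw [ropts_add, lopts_neg, lopts_neg]
      simp only [List.map_append, List.map_map]
      congr 1
      · exact List.map_congr_left fun g hg => by
          have := neg_add g H; simpa using this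
      · exact List.map_congr_left fun g hg => by
          have := neg_add (node L R) g; simpa using this
    · rw [lopts_add, ropts_neg, ropts_neg]
      simp only [List.map_append, List.map_map]
      congr 1
      · exact List.map_congr_left fun g hg => by
          have := neg_add g H; simpa using this
      · exact List.map_congr_left fun g hg => by
          have := neg_add (node L R) g; simpa using this
termination_by G H => sizeOf G + sizeOf H
decreasing_by
  all_goals
    first
      | (have := sizeOf_lt_of_mem_lopts hg; omega)
      | (have := sizeOf_lt_of_mem_ropts hg; omega)
      | (have := sizeOf_lt_of_mem_lopts (G := node L R) (by simpa [lopts] using hg); omega)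
      | (have := sizeOf_lt_of_mem_ropts (G := node L R) (by simpa [ropts] using hg); omega)

/-! ### associativity -/

theorem add_eq_int {A B : WT} {m : ℤ} (h : A.add B = int m) : ∃ a b : ℤ, A = int a ∧ B = int b := by
  cases A with
  | int a =>
    cases B with
    | int b => exact ⟨a, b, rfl, rfl⟩
    | node L R =>
      rw [add_def' _ _ (by intro _ _ _ hh; cases hh)] at h
      cases h
  | node L R =>
    rw [add_def' _ _ (by intro _ _ hh; cases hh)] at h
    cases h

theorem add_assoc : ∀ (A B C : WT), (A.add B).add C = A.add (B.add C) := by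
  intro A B C
  by_cases h : (∃ a : ℤ, A = int a) ∧ (∃ b : ℤ, B = int b) ∧ (∃ c : ℤ, C = int c)
  · obtain ⟨⟨a, rfl⟩, ⟨b, rfl⟩, ⟨c, rfl⟩⟩ := h
    rw [add_int_int, add_int_int, add_int_int, add_int_int]
    congr 1
    ring
  · have hAB_C : ∀ m n : ℤ, A.add B = int m → C = int n → False := by
      intro m n hm hn
      obtain ⟨a, b, ha, hb⟩ := add_eq_int hm
      exact h ⟨⟨a, ha⟩, ⟨b, hb⟩, ⟨n, hn⟩⟩
    have hA_BC : ∀ m n : ℤ, A = int m → B.add C = int n → False := by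
      intro m n hm hn
      obtain ⟨b, c, hb, hc⟩ := add_eq_int hn
      exact h ⟨⟨m, hm⟩, ⟨b, hb⟩, ⟨c, hc⟩⟩
    rw [add_def' _ _ hAB_C, add_def' _ _ hA_BC]
    congr 1 <;>
    · simp only [lopts_add, ropts_add, List.map_append, List.map_map, List.append_assoc]
      congr 1
      · exact List.map_congr_left fun g hg => by
          simpa [Function.comp] using add_assoc g B C
      congr 1
      · exact List.map_congr_left fun g hg => by
          simpa [Function.comp] using add_assoc A g C
      · exact List.map_congr_left fun g hg => add_assoc A B g
termination_by A B C => sizeOf A + sizeOf B + sizeOf C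
decreasing_by
  all_goals
    first
      | (have := sizeOf_lt_of_mem_lopts hg; omega)
      | (have := sizeOf_lt_of_mem_ropts hg; omega)

/-! ### IsWT lemmas -/

theorem isWT_node_elim {L R : List WT} {p : Bool} (h : IsWT (node L R) p) :
    L ≠ [] ∧ R ≠ [] ∧ (∀ g ∈ L, IsWT g (!p)) ∧ (∀ g ∈ R, IsWT g (!p)) := by
  cases h with
  | node hL hR hLp hRp =>
    simp only [Bool.not_not]
    exact ⟨hL, hR, hLp, hRp⟩

theorem isWT_int_elim {n : ℤ} {p : Bool} (h : IsWT (int n) p) : p = false := by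
  cases h; rfl

theorem isWT_unique {G : WT} {p q : Bool} (hp : IsWT G p) (hq : IsWT G q) : p = q := by
  induction hp generalizing q with
  | int n => cases hq; rfl
  | node hL hR hLp hRp ih1 ih2 =>
    obtain ⟨_, _, hLq, _⟩ := isWT_node_elim hq
    obtain ⟨g, hg⟩ := List.exists_mem_of_ne_nil _ hL
    have := ih1 g hg (hLq g hg)
    rw [this]
    simp

theorem isWT_neg {G : WT} {p : Bool} (h : IsWT G p) : IsWT G.neg p := by
  induction h with
  | int n => rw [neg_int]; exact IsWT.int _
  | node hL hR hLp hRp ih1 ih2 =>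
    rw [neg_node]
    refine IsWT.node (by simpa using hR) (by simpa using hL) ?_ ?_
    · intro g hg
      obtain ⟨g', hg', rfl⟩ := List.mem_map.1 hg
      exact ih2 g' hg'
    · intro g hg
      obtain ⟨g', hg', rfl⟩ := List.mem_map.1 hg
      exact ih1 g' hg'

theorem isWT_lopt {H g : WT} {q : Bool} (hq : IsWT H q) (hg : g ∈ H.lopts) : IsWT g (!q) := by
  cases H with
  | int n => simp [lopts] at hg
  | node L R => exact (isWT_node_elim hq).2.2.1 g hg

theorem isWT_ropt {H g : WT} {q : Bool} (hq : IsWT H q) (hg : g ∈ H.ropts) : IsWT g (!q) := by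
  cases H with
  | int n => simp [ropts] at hg
  | node L R => exact (isWT_node_elim hq).2.2.2 g hg

theorem isWT_add : ∀ (G H : WT) {p q : Bool}, IsWT G p → IsWT H q → IsWT (G.add H) (xor p q)
  | int a, int b, p, q, hp, hq => by
    rw [isWT_int_elim hp, isWT_int_elim hq, add_int_int]
    exact IsWT.int _
  | int a, node L2 R2, p, q, hp, hq => by
    obtain ⟨hL, hR, hLq, hRq⟩ := isWT_node_elim hq
    rw [add_def' _ _ (fun _ _ _ hh => by cases hh)]
    have key : IsWT (node
        ((int a : WT).lopts.map (fun g => g.add (node L2 R2)) ++ L2.map (fun x => (int a : WT).add x))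
        ((int a : WT).ropts.map (fun g => g.add (node L2 R2)) ++ R2.map (fun x => (int a : WT).add x)))
        (!(p ^^ !q)) := by
      refine IsWT.node (by simp [lopts, hL]) (by simp [ropts, hR]) ?_ ?_
      · intro g hg
        simp only [lopts, List.map_nil, List.nil_append, List.mem_map] at hg
        obtain ⟨g', hg', rfl⟩ := hg
        exact isWT_add (int a) g' hp (hLq g' hg')
      · intro g hg
        simp only [ropts, List.map_nil, List.nil_append, List.mem_map] at hg
        obtain ⟨g', hg', rfl⟩ := hg
        exact isWT_add (int a) g' hp (hRq g' hg')
    have hb : (!(p ^^ !q)) = (p ^^ q) := by cases p <;> cases q <;> rfl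
    rw [hb] at key
    exact key
  | node L1 R1, H, p, q, hp, hq => by
    obtain ⟨hL, hR, hLp, hRp⟩ := isWT_node_elim hp
    rw [add_def' _ _ (fun _ _ hh => by cases hh)]
    have key : IsWT (node
        (L1.map (fun g => g.add H) ++ H.lopts.map (fun x => (node L1 R1).add x))
        (R1.map (fun g => g.add H) ++ H.ropts.map (fun x => (node L1 R1).add x)))
        (!(!p ^^ q)) := by
      refine IsWT.node (by simp [hL]) (by simp [hR]) ?_ ?_
      · intro g hg
        rcases List.mem_append.1 hg with hg | hg
        · obtain ⟨g', hg', rfl⟩ := List.mem_map.1 hg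
          exact isWT_add g' H (hLp g' hg') hq
        · obtain ⟨g', hg', rfl⟩ := List.mem_map.1 hg
          have := isWT_add (node L1 R1) g' hp (isWT_lopt hq hg')
          have hb : (p ^^ !q) = (!p ^^ q) := by cases p <;> cases q <;> rfl
          rw [hb] at this
          exact this
      · intro g hg
        rcases List.mem_append.1 hg with hg | hg
        · obtain ⟨g', hg', rfl⟩ := List.mem_map.1 hg
          exact isWT_add g' H (hRp g' hg') hq
        · obtain ⟨g', hg', rfl⟩ := List.mem_map.1 hg
          have := isWT_add (node L1 R1) g' hp (isWT_ropt hq hg')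
          have hb : (p ^^ !q) = (!p ^^ q) := by cases p <;> cases q <;> rfl
          rw [hb] at this
          exact this
    have hb : (!(!p ^^ q)) = (p ^^ q) := by cases p <;> cases q <;> rfl
    rw [hb] at key
    exact key
termination_by G H => sizeOf G + sizeOf H
decreasing_by
  all_goals
    first
      | (have := sizeOf_lt_of_mem_lopts hg'; omega)
      | (have := sizeOf_lt_of_mem_ropts hg'; omega)
      | (have := List.sizeOf_lt_of_mem hg'; simp only [WT.node.sizeOf_spec]; omega)

theorem wt_add {G H : WT} (hG : G.Wt) (hH : H.Wt) : (G.add H).Wt := by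
  obtain ⟨p, hp⟩ := hG; obtain ⟨q, hq⟩ := hH
  exact ⟨_, isWT_add G H hp hq⟩

theorem wt_neg {G : WT} (hG : G.Wt) : G.neg.Wt := by
  obtain ⟨p, hp⟩ := hG; exact ⟨p, isWT_neg hp⟩

theorem wt_int (n : ℤ) : (int n : WT).Wt := ⟨false, IsWT.int n⟩

/-! ### permutation invariance of lmax/lmin, shift lemmas -/

theorem lmax_perm {l₁ l₂ : List ℤ} (h : l₁.Perm l₂) : lmax l₁ = lmax l₂ := by
  apply lmax_eq_of
  · constructor
    · intro e; subst e; exact h.nil_eq.symm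
    · intro e; subst e; exact h.symm.nil_eq.symm
  · exact fun a ha => ⟨a, h.mem_iff.1 ha, le_rfl⟩
  · exact fun b hb => ⟨b, h.mem_iff.2 hb, le_rfl⟩

theorem lmin_perm {l₁ l₂ : List ℤ} (h : l₁.Perm l₂) : lmin l₁ = lmin l₂ := by
  apply lmin_eq_of
  · constructor
    · intro e; subst e; exact h.nil_eq.symm
    · intro e; subst e; exact h.symm.nil_eq.symm
  · exact fun a ha => ⟨a, h.mem_iff.1 ha, le_rfl⟩
  · exact fun b hb => ⟨b, h.mem_iff.2 hb, le_rfl⟩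

theorem lmax_map_add {l : List ℤ} (hne : l ≠ []) (c : ℤ) :
    lmax (l.map (fun x => c + x)) = c + lmax l := by
  apply le_antisymm
  · refine lmax_le (by simpa using hne) ?_
    intro a ha
    obtain ⟨x, hx, rfl⟩ := List.mem_map.1 ha
    exact add_le_add_right (le_lmax hx) c
  · exact le_lmax (List.mem_map.2 ⟨lmax l, lmax_mem hne, rfl⟩)

theorem lmin_map_add {l : List ℤ} (hne : l ≠ []) (c : ℤ) :
    lmin (l.map (fun x => c + x)) = c + lmin l := by
  apply le_antisymm
  · exact lmin_le (List.mem_map.2 ⟨lmin l, lmin_mem hne, rfl⟩)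
  · refine le_lmin (by simpa using hne) ?_
    intro a ha
    obtain ⟨x, hx, rfl⟩ := List.mem_map.1 ha
    exact add_le_add_right (lmin_le hx) c

theorem out_add (G H : WT) (h : ∀ m n : ℤ, G = int m → H = int n → False) :
    (G.add H).out =
      (lmax ((G.lopts.map (fun g => g.add H) ++ H.lopts.map (fun x => G.add x)).map
          (fun g => g.out.2)),
       lmin ((G.ropts.map (fun g => g.add H) ++ H.ropts.map (fun x => G.add x)).map
          (fun g => g.out.1))) := by
  rw [add_def' _ _ h, out_node]

theorem wt_lopt {X g : WT} (h : X.Wt) (hg : g ∈ X.lopts) : g.Wt := by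
  obtain ⟨p, hp⟩ := h; exact ⟨_, isWT_lopt hp hg⟩

theorem wt_ropt {X g : WT} (h : X.Wt) (hg : g ∈ X.ropts) : g.Wt := by
  obtain ⟨p, hp⟩ := h; exact ⟨_, isWT_ropt hp hg⟩

theorem wt_node_lopts_ne {L R : List WT} (h : (node L R : WT).Wt) : L ≠ [] := by
  obtain ⟨p, hp⟩ := h; exact (isWT_node_elim hp).1

theorem wt_node_ropts_ne {L R : List WT} (h : (node L R : WT).Wt) : R ≠ [] := by
  obtain ⟨p, hp⟩ := h; exact (isWT_node_elim hp).2.1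

theorem out_int_add (c : ℤ) : ∀ (X : WT), X.Wt → ((int c).add X).out = (c + X.out.1, c + X.out.2)
  | int n, hw => by rw [add_int_int, out_int, out_int]
  | node L R, hw => by
    rw [out_add _ _ (by intro _ _ _ hh; cases hh), out_node]
    have hL := wt_node_lopts_ne hw
    have hR := wt_node_ropts_ne hw
    refine Prod.ext ?_ ?_
    · show lmax _ = c + lmax _
      have : ((int c : WT).lopts.map (fun g => g.add (node L R)) ++
          (node L R : WT).lopts.map (fun x => (int c : WT).add x)).map (fun g => g.out.2)
          = (L.map (fun g => g.out.2)).map (fun x => c + x) := by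
        simp only [lopts, List.map_nil, List.nil_append, List.map_map]
        refine List.map_congr_left fun g hg => ?_
        show ((int c).add g).out.2 = c + g.out.2
        rw [out_int_add c g (wt_lopt hw (by simpa [lopts] using hg))]
      rw [this, lmax_map_add (by simpa using hL)]
    · show lmin _ = c + lmin _
      have : ((int c : WT).ropts.map (fun g => g.add (node L R)) ++
          (node L R : WT).ropts.map (fun x => (int c : WT).add x)).map (fun g => g.out.1)
          = (R.map (fun g => g.out.1)).map (fun x => c + x) := by
        simp only [ropts, List.map_nil, List.nil_append, List.map_map]
        refine List.map_congr_left fun g hg => ?_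
        show ((int c).add g).out.1 = c + g.out.1
        rw [out_int_add c g (wt_ropt hw (by simpa [ropts] using hg))]
      rw [this, lmin_map_add (by simpa using hR)]
termination_by X _ => sizeOf X
decreasing_by
  all_goals
    first
      | (have := sizeOf_lt_of_mem_lopts hg; omega)
      | (have := sizeOf_lt_of_mem_ropts hg; omega)
      | (have := List.sizeOf_lt_of_mem hg; simp only [WT.node.sizeOf_spec]; omega)

theorem out_add_int (c : ℤ) : ∀ (X : WT), X.Wt → (X.add (int c)).out = (c + X.out.1, c + X.out.2)
  | int n, hw => by
    rw [add_int_int, out_int, out_int]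
    simp [Int.add_comm]
  | node L R, hw => by
    rw [out_add _ _ (by intro _ _ hh; cases hh), out_node]
    have hL := wt_node_lopts_ne hw
    have hR := wt_node_ropts_ne hw
    refine Prod.ext ?_ ?_
    · show lmax _ = c + lmax _
      have : ((node L R : WT).lopts.map (fun g => g.add (int c)) ++
          (int c : WT).lopts.map (fun x => (node L R : WT).add x)).map (fun g => g.out.2)
          = (L.map (fun g => g.out.2)).map (fun x => c + x) := by
        simp only [lopts, List.map_nil, List.append_nil, List.map_map]
        refine List.map_congr_left fun g hg => ?_
        show (g.add (int c)).out.2 = c + g.out.2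
        rw [out_add_int c g (wt_lopt hw (by simpa [lopts] using hg))]
      rw [this, lmax_map_add (by simpa using hL)]
    · show lmin _ = c + lmin _
      have : ((node L R : WT).ropts.map (fun g => g.add (int c)) ++
          (int c : WT).ropts.map (fun x => (node L R : WT).add x)).map (fun g => g.out.1)
          = (R.map (fun g => g.out.1)).map (fun x => c + x) := by
        simp only [ropts, List.map_nil, List.append_nil, List.map_map]
        refine List.map_congr_left fun g hg => ?_
        show (g.add (int c)).out.1 = c + g.out.1
        rw [out_add_int c g (wt_ropt hw (by simpa [ropts] using hg))]
      rw [this, lmin_map_add (by simpa using hR)]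
termination_by X _ => sizeOf X
decreasing_by
  all_goals
    first
      | (have := sizeOf_lt_of_mem_lopts hg; omega)
      | (have := sizeOf_lt_of_mem_ropts hg; omega)
      | (have := List.sizeOf_lt_of_mem hg; simp only [WT.node.sizeOf_spec]; omega)

/-! ### commutation of outcomes -/

theorem lmax_out_congr {l₁ l₂ : List WT}
    (hn : l₁ = [] ↔ l₂ = [])
    (h : ∀ g ∈ l₁, ∃ g' ∈ l₂, g.out = g'.out)
    (h' : ∀ g' ∈ l₂, ∃ g ∈ l₁, g'.out = g.out) :
    lmax (l₁.map fun g => g.out.2) = lmax (l₂.map fun g => g.out.2) := by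
  apply lmax_eq_of
  · simp only [List.map_eq_nil_iff]
    exact hn
  · intro a ha
    obtain ⟨g, hg, rfl⟩ := List.mem_map.1 ha
    obtain ⟨g', hg', he⟩ := h g hg
    exact ⟨g'.out.2, List.mem_map.2 ⟨g', hg', rfl⟩, le_of_eq (congrArg Prod.snd he)⟩
  · intro a ha
    obtain ⟨g', hg', rfl⟩ := List.mem_map.1 ha
    obtain ⟨g, hg, he⟩ := h' g' hg'
    exact ⟨g.out.2, List.mem_map.2 ⟨g, hg, rfl⟩, le_of_eq (congrArg Prod.snd he)⟩

theorem lmin_out_congr {l₁ l₂ : List WT}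
    (hn : l₁ = [] ↔ l₂ = [])
    (h : ∀ g ∈ l₁, ∃ g' ∈ l₂, g.out = g'.out)
    (h' : ∀ g' ∈ l₂, ∃ g ∈ l₁, g'.out = g.out) :
    lmin (l₁.map fun g => g.out.1) = lmin (l₂.map fun g => g.out.1) := by
  apply lmin_eq_of
  · simp only [List.map_eq_nil_iff]
    exact hn
  · intro a ha
    obtain ⟨g, hg, rfl⟩ := List.mem_map.1 ha
    obtain ⟨g', hg', he⟩ := h g hg
    exact ⟨g'.out.1, List.mem_map.2 ⟨g', hg', rfl⟩, le_of_eq (congrArg Prod.fst he).symm⟩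
  · intro a ha
    obtain ⟨g', hg', rfl⟩ := List.mem_map.1 ha
    obtain ⟨g, hg, he⟩ := h' g' hg'
    exact ⟨g.out.1, List.mem_map.2 ⟨g, hg, rfl⟩, le_of_eq (congrArg Prod.fst he).symm⟩

theorem out_add_comm : ∀ (G H : WT), (G.add H).out = (H.add G).out
  | int m, int n => by rw [add_int_int, add_int_int, Int.add_comm]
  | int m, node L2 R2 => by
    have c1 : ∀ a b : ℤ, (int m : WT) = int a → (node L2 R2 : WT) = int b → False := by
      intro _ _ _ hh; cases hh
    have c2 : ∀ a b : ℤ, (node L2 R2 : WT) = int a → (int m : WT) = int b → False := by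
      intro _ _ hh; cases hh
    rw [out_add _ _ c1, out_add _ _ c2]
    refine Prod.ext ?_ ?_
    · refine lmax_out_congr ?_ ?_ ?_
      · simp [lopts]
      · intro g hg
        simp only [lopts, List.map_nil, List.nil_append, List.append_nil, List.mem_map] at hg ⊢
        obtain ⟨g', hg', rfl⟩ := hg
        exact ⟨g'.add (int m), ⟨g', hg', rfl⟩, out_add_comm (int m) g'⟩
      · intro g hg
        simp only [lopts, List.map_nil, List.nil_append, List.append_nil, List.mem_map] at hg ⊢
        obtain ⟨g', hg', rfl⟩ := hg
        exact ⟨(int m).add g', ⟨g', hg', rfl⟩, (out_add_comm (int m) g').symm⟩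
    · refine lmin_out_congr ?_ ?_ ?_
      · simp [ropts]
      · intro g hg
        simp only [ropts, List.map_nil, List.nil_append, List.append_nil, List.mem_map] at hg ⊢
        obtain ⟨g', hg', rfl⟩ := hg
        exact ⟨g'.add (int m), ⟨g', hg', rfl⟩, out_add_comm (int m) g'⟩
      · intro g hg
        simp only [ropts, List.map_nil, List.nil_append, List.append_nil, List.mem_map] at hg ⊢
        obtain ⟨g', hg', rfl⟩ := hg
        exact ⟨(int m).add g', ⟨g', hg', rfl⟩, (out_add_comm (int m) g').symm⟩
  | node L1 R1, H => by
    have c1 : ∀ a b : ℤ, (node L1 R1 : WT) = int a → H = int b → False := by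
      intro _ _ hh; cases hh
    have c2 : ∀ a b : ℤ, H = int a → (node L1 R1 : WT) = int b → False := by
      intro _ _ _ hh; cases hh
    rw [out_add _ _ c1, out_add _ _ c2]
    refine Prod.ext ?_ ?_
    · refine lmax_out_congr ?_ ?_ ?_
      · simp only [List.append_eq_nil_iff, List.map_eq_nil_iff]
        exact and_comm
      · intro g hg
        simp only [List.mem_append, List.mem_map] at hg ⊢
        rcases hg with ⟨g', hg', rfl⟩ | ⟨g', hg', rfl⟩
        · exact ⟨H.add g', Or.inr ⟨g', hg', rfl⟩, out_add_comm g' H⟩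
        · exact ⟨g'.add (node L1 R1), Or.inl ⟨g', hg', rfl⟩, out_add_comm (node L1 R1) g'⟩
      · intro g hg
        simp only [List.mem_append, List.mem_map] at hg ⊢
        rcases hg with ⟨g', hg', rfl⟩ | ⟨g', hg', rfl⟩
        · exact ⟨(node L1 R1).add g', Or.inr ⟨g', hg', rfl⟩, (out_add_comm (node L1 R1) g').symm⟩
        · exact ⟨g'.add H, Or.inl ⟨g', hg', rfl⟩, (out_add_comm g' H).symm⟩
    · refine lmin_out_congr ?_ ?_ ?_
      · simp only [List.append_eq_nil_iff, List.map_eq_nil_iff]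
        exact and_comm
      · intro g hg
        simp only [List.mem_append, List.mem_map] at hg ⊢
        rcases hg with ⟨g', hg', rfl⟩ | ⟨g', hg', rfl⟩
        · exact ⟨H.add g', Or.inr ⟨g', hg', rfl⟩, out_add_comm g' H⟩
        · exact ⟨g'.add (node L1 R1), Or.inl ⟨g', hg', rfl⟩, out_add_comm (node L1 R1) g'⟩
      · intro g hg
        simp only [List.mem_append, List.mem_map] at hg ⊢
        rcases hg with ⟨g', hg', rfl⟩ | ⟨g', hg', rfl⟩
        · exact ⟨(node L1 R1).add g', Or.inr ⟨g', hg', rfl⟩, (out_add_comm (node L1 R1) g').symm⟩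
        · exact ⟨g'.add H, Or.inl ⟨g', hg', rfl⟩, (out_add_comm g' H).symm⟩
termination_by G H => sizeOf G + sizeOf H
decreasing_by
  all_goals
    first
      | (have := sizeOf_lt_of_mem_lopts hg'; omega)
      | (have := sizeOf_lt_of_mem_ropts hg'; omega)
      | (have := List.sizeOf_lt_of_mem hg'; simp only [WT.node.sizeOf_spec]; omega)

/-! ### swapping summands -/

theorem out_swap3 : ∀ (A B Z : WT), (A.add (B.add Z)).out = (B.add (A.add Z)).out := by
  intro A B Z
  by_cases hall : (∃ a : ℤ, A = int a) ∧ (∃ b : ℤ, B = int b) ∧ (∃ z : ℤ, Z = int z)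
  · obtain ⟨⟨a, rfl⟩, ⟨b, rfl⟩, ⟨z, rfl⟩⟩ := hall
    rw [add_int_int, add_int_int, add_int_int, add_int_int]
    have : a + (b + z) = b + (a + z) := by ring
    rw [this]
  · have c1 : ∀ m n : ℤ, A = int m → (B.add Z) = int n → False := by
      intro m n hm hn
      obtain ⟨b, z, hb, hz⟩ := add_eq_int hn
      exact hall ⟨⟨m, hm⟩, ⟨b, hb⟩, ⟨z, hz⟩⟩
    have c2 : ∀ m n : ℤ, B = int m → (A.add Z) = int n → False := by
      intro m n hm hn
      obtain ⟨a, z, ha, hz⟩ := add_eq_int hn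
      exact hall ⟨⟨a, ha⟩, ⟨m, hm⟩, ⟨z, hz⟩⟩
    rw [out_add _ _ c1, out_add _ _ c2]
    refine Prod.ext ?_ ?_
    · refine lmax_out_congr ?_ ?_ ?_
      · simp only [lopts_add, List.append_eq_nil_iff, List.map_eq_nil_iff]
        tauto
      · intro g hg
        simp only [lopts_add, List.map_append, List.map_map, Function.comp_apply, List.mem_append, List.mem_map] at hg ⊢
        rcases hg with ⟨a', ha', rfl⟩ | ⟨b', hb', rfl⟩ | ⟨z', hz', rfl⟩
        · exact ⟨B.add (a'.add Z), Or.inr (Or.inl ⟨a', ha', rfl⟩), out_swap3 a' B Z⟩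
        · exact ⟨b'.add (A.add Z), Or.inl ⟨b', hb', rfl⟩, (out_swap3 b' A Z).symm⟩
        · exact ⟨B.add (A.add z'), Or.inr (Or.inr ⟨z', hz', rfl⟩), out_swap3 A B z'⟩
      · intro g hg
        simp only [lopts_add, List.map_append, List.map_map, Function.comp_apply, List.mem_append, List.mem_map] at hg ⊢
        rcases hg with ⟨b', hb', rfl⟩ | ⟨a', ha', rfl⟩ | ⟨z', hz', rfl⟩
        · exact ⟨A.add (b'.add Z), Or.inr (Or.inl ⟨b', hb', rfl⟩), out_swap3 b' A Z⟩
        · exact ⟨a'.add (B.add Z), Or.inl ⟨a', ha', rfl⟩, (out_swap3 a' B Z).symm⟩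
        · exact ⟨A.add (B.add z'), Or.inr (Or.inr ⟨z', hz', rfl⟩), (out_swap3 A B z').symm⟩
    · refine lmin_out_congr ?_ ?_ ?_
      · simp only [ropts_add, List.append_eq_nil_iff, List.map_eq_nil_iff]
        tauto
      · intro g hg
        simp only [ropts_add, List.map_append, List.map_map, Function.comp_apply, List.mem_append, List.mem_map] at hg ⊢
        rcases hg with ⟨a', ha', rfl⟩ | ⟨b', hb', rfl⟩ | ⟨z', hz', rfl⟩
        · exact ⟨B.add (a'.add Z), Or.inr (Or.inl ⟨a', ha', rfl⟩), out_swap3 a' B Z⟩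
        · exact ⟨b'.add (A.add Z), Or.inl ⟨b', hb', rfl⟩, (out_swap3 b' A Z).symm⟩
        · exact ⟨B.add (A.add z'), Or.inr (Or.inr ⟨z', hz', rfl⟩), out_swap3 A B z'⟩
      · intro g hg
        simp only [ropts_add, List.map_append, List.map_map, Function.comp_apply, List.mem_append, List.mem_map] at hg ⊢
        rcases hg with ⟨b', hb', rfl⟩ | ⟨a', ha', rfl⟩ | ⟨z', hz', rfl⟩
        · exact ⟨A.add (b'.add Z), Or.inr (Or.inl ⟨b', hb', rfl⟩), out_swap3 b' A Z⟩
        · exact ⟨a'.add (B.add Z), Or.inl ⟨a', ha', rfl⟩, (out_swap3 a' B Z).symm⟩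
        · exact ⟨A.add (B.add z'), Or.inr (Or.inr ⟨z', hz', rfl⟩), (out_swap3 A B z').symm⟩
termination_by A B Z => sizeOf A + sizeOf B + sizeOf Z
decreasing_by
  all_goals
    first
      | (have := sizeOf_lt_of_mem_lopts ha'; omega)
      | (have := sizeOf_lt_of_mem_ropts ha'; omega)
      | (have := sizeOf_lt_of_mem_lopts hb'; omega)
      | (have := sizeOf_lt_of_mem_ropts hb'; omega)
      | (have := sizeOf_lt_of_mem_lopts hz'; omega)
      | (have := sizeOf_lt_of_mem_ropts hz'; omega)

theorem out_swap : ∀ (C A B Z : WT),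
    (C.add (A.add (B.add Z))).out = (C.add (B.add (A.add Z))).out := by
  intro C A B Z
  by_cases hall : (∃ c : ℤ, C = int c) ∧ (∃ a : ℤ, A = int a) ∧ (∃ b : ℤ, B = int b) ∧
      (∃ z : ℤ, Z = int z)
  · obtain ⟨⟨c, rfl⟩, ⟨a, rfl⟩, ⟨b, rfl⟩, ⟨z, rfl⟩⟩ := hall
    rw [add_int_int, add_int_int, add_int_int, add_int_int, add_int_int, add_int_int]
    have : c + (a + (b + z)) = c + (b + (a + z)) := by ring
    rw [this]
  · have c1 : ∀ m n : ℤ, C = int m → (A.add (B.add Z)) = int n → False := by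
      intro m n hm hn
      obtain ⟨a, w, ha, hw⟩ := add_eq_int hn
      obtain ⟨b, z, hb, hz⟩ := add_eq_int hw
      exact hall ⟨⟨m, hm⟩, ⟨a, ha⟩, ⟨b, hb⟩, ⟨z, hz⟩⟩
    have c2 : ∀ m n : ℤ, C = int m → (B.add (A.add Z)) = int n → False := by
      intro m n hm hn
      obtain ⟨b, w, hb, hw⟩ := add_eq_int hn
      obtain ⟨a, z, ha, hz⟩ := add_eq_int hw
      exact hall ⟨⟨m, hm⟩, ⟨a, ha⟩, ⟨b, hb⟩, ⟨z, hz⟩⟩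
    rw [out_add _ _ c1, out_add _ _ c2]
    refine Prod.ext ?_ ?_
    · refine lmax_out_congr ?_ ?_ ?_
      · simp only [lopts_add, List.map_append, List.map_map, List.append_eq_nil_iff, List.map_eq_nil_iff,
          List.append_assoc]
        tauto
      · intro g hg
        simp only [lopts_add, List.map_append, List.map_map, Function.comp_apply, List.mem_append, List.mem_map,
          List.append_assoc] at hg ⊢
        rcases hg with ⟨c', hc', rfl⟩ | ⟨a', ha', rfl⟩ | ⟨b', hb', rfl⟩ | ⟨z', hz', rfl⟩
        · exact ⟨c'.add (B.add (A.add Z)), Or.inl ⟨c', hc', rfl⟩, out_swap c' A B Z⟩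
        · exact ⟨C.add (B.add (a'.add Z)), Or.inr (Or.inr (Or.inl ⟨a', ha', rfl⟩)),
            out_swap C a' B Z⟩
        · exact ⟨C.add (b'.add (A.add Z)), Or.inr (Or.inl ⟨b', hb', rfl⟩),
            (out_swap C b' A Z).symm⟩
        · exact ⟨C.add (B.add (A.add z')), Or.inr (Or.inr (Or.inr ⟨z', hz', rfl⟩)),
            out_swap C A B z'⟩
      · intro g hg
        simp only [lopts_add, List.map_append, List.map_map, Function.comp_apply, List.mem_append, List.mem_map,
          List.append_assoc] at hg ⊢
        rcases hg with ⟨c', hc', rfl⟩ | ⟨b', hb', rfl⟩ | ⟨a', ha', rfl⟩ | ⟨z', hz', rfl⟩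
        · exact ⟨c'.add (A.add (B.add Z)), Or.inl ⟨c', hc', rfl⟩, (out_swap c' A B Z).symm⟩
        · exact ⟨C.add (A.add (b'.add Z)), Or.inr (Or.inr (Or.inl ⟨b', hb', rfl⟩)),
            out_swap C b' A Z⟩
        · exact ⟨C.add (a'.add (B.add Z)), Or.inr (Or.inl ⟨a', ha', rfl⟩),
            (out_swap C a' B Z).symm⟩
        · exact ⟨C.add (A.add (B.add z')), Or.inr (Or.inr (Or.inr ⟨z', hz', rfl⟩)),
            (out_swap C A B z').symm⟩
    · refine lmin_out_congr ?_ ?_ ?_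
      · simp only [ropts_add, List.map_append, List.map_map, List.append_eq_nil_iff, List.map_eq_nil_iff,
          List.append_assoc]
        tauto
      · intro g hg
        simp only [ropts_add, List.map_append, List.map_map, Function.comp_apply, List.mem_append, List.mem_map,
          List.append_assoc] at hg ⊢
        rcases hg with ⟨c', hc', rfl⟩ | ⟨a', ha', rfl⟩ | ⟨b', hb', rfl⟩ | ⟨z', hz', rfl⟩
        · exact ⟨c'.add (B.add (A.add Z)), Or.inl ⟨c', hc', rfl⟩, out_swap c' A B Z⟩
        · exact ⟨C.add (B.add (a'.add Z)), Or.inr (Or.inr (Or.inl ⟨a', ha', rfl⟩)),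
            out_swap C a' B Z⟩
        · exact ⟨C.add (b'.add (A.add Z)), Or.inr (Or.inl ⟨b', hb', rfl⟩),
            (out_swap C b' A Z).symm⟩
        · exact ⟨C.add (B.add (A.add z')), Or.inr (Or.inr (Or.inr ⟨z', hz', rfl⟩)),
            out_swap C A B z'⟩
      · intro g hg
        simp only [ropts_add, List.map_append, List.map_map, Function.comp_apply, List.mem_append, List.mem_map,
          List.append_assoc] at hg ⊢
        rcases hg with ⟨c', hc', rfl⟩ | ⟨b', hb', rfl⟩ | ⟨a', ha', rfl⟩ | ⟨z', hz', rfl⟩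
        · exact ⟨c'.add (A.add (B.add Z)), Or.inl ⟨c', hc', rfl⟩, (out_swap c' A B Z).symm⟩
        · exact ⟨C.add (A.add (b'.add Z)), Or.inr (Or.inr (Or.inl ⟨b', hb', rfl⟩)),
            out_swap C b' A Z⟩
        · exact ⟨C.add (a'.add (B.add Z)), Or.inr (Or.inl ⟨a', ha', rfl⟩),
            (out_swap C a' B Z).symm⟩
        · exact ⟨C.add (A.add (B.add z')), Or.inr (Or.inr (Or.inr ⟨z', hz', rfl⟩)),
            (out_swap C A B z').symm⟩
termination_by C A B Z => sizeOf C + sizeOf A + sizeOf B + sizeOf Z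
decreasing_by
  all_goals
    first
      | (have := sizeOf_lt_of_mem_lopts hc'; omega)
      | (have := sizeOf_lt_of_mem_ropts hc'; omega)
      | (have := sizeOf_lt_of_mem_lopts ha'; omega)
      | (have := sizeOf_lt_of_mem_ropts ha'; omega)
      | (have := sizeOf_lt_of_mem_lopts hb'; omega)
      | (have := sizeOf_lt_of_mem_ropts hb'; omega)
      | (have := sizeOf_lt_of_mem_lopts hz'; omega)
      | (have := sizeOf_lt_of_mem_ropts hz'; omega)

/-! ### subgames, gap, and the `good` predicate -/

/-- All even-tempered subgames `K` satisfy `R(K) ≤ L(K)`. -/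
def good (G : WT) : Prop := ∀ K : WT, Subgame K G → IsWT K false → K.Rout ≤ K.Lout

theorem subgame_trans {A B C : WT} (h1 : Subgame A B) (h2 : Subgame B C) : Subgame A C := by
  induction h2 with
  | refl => exact h1
  | left hmem hsub ih => exact Subgame.left hmem ih
  | right hmem hsub ih => exact Subgame.right hmem ih

theorem good_subgame {G K : WT} (h : good G) (hs : Subgame K G) : good K :=
  fun K' hs' hw => h K' (subgame_trans hs' hs) hw

theorem subgame_of_lopt {G g : WT} (hg : g ∈ G.lopts) : Subgame g G := by
  cases G with
  | int n => simp [lopts] at hg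
  | node L R => exact Subgame.left hg (Subgame.refl g)

theorem subgame_of_ropt {G g : WT} (hg : g ∈ G.ropts) : Subgame g G := by
  cases G with
  | int n => simp [ropts] at hg
  | node L R => exact Subgame.right hg (Subgame.refl g)

theorem subgame_int {n : ℤ} {K : WT} (h : Subgame K (int n)) : K = int n := by
  cases h; rfl

theorem subgame_wt : ∀ {K G : WT}, Subgame K G → ∀ {p : Bool}, IsWT G p → ∃ q, IsWT K q := by
  intro K G h
  induction h with
  | refl => exact fun hp => ⟨_, hp⟩
  | left hmem hsub ih => exact fun hp => ih (isWT_lopt hp hmem)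
  | right hmem hsub ih => exact fun hp => ih (isWT_ropt hp hmem)

theorem subgame_neg : ∀ {K G : WT}, Subgame K G → Subgame K.neg G.neg := by
  intro K G h
  induction h with
  | refl => exact Subgame.refl _
  | left hmem hsub ih =>
    rw [neg_node]
    exact Subgame.right (List.mem_map.2 ⟨_, hmem, rfl⟩) ih
  | right hmem hsub ih =>
    rw [neg_node]
    exact Subgame.left (List.mem_map.2 ⟨_, hmem, rfl⟩) ih

theorem good_neg {G : WT} (h : good G) : good G.neg := by
  intro K hs hw
  have h1 : Subgame K.neg G := by
    have := subgame_neg hs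
    rwa [neg_neg] at this
  have h2 : IsWT K.neg false := isWT_neg hw
  have := h K.neg h1 h2
  simp only [Lout, Rout, out_neg] at this
  simp only [Lout, Rout]
  omega

theorem subgame_add : ∀ {K W : WT}, Subgame K W → ∀ {A B : WT}, W = A.add B →
    ∃ A' B', Subgame A' A ∧ Subgame B' B ∧ K = A'.add B' := by
  intro K W h
  induction h with
  | refl => exact fun {A B} e => ⟨A, B, Subgame.refl A, Subgame.refl B, e⟩
  | @left G' L R hmem hsub ih =>
    intro A B e
    have hg' : G' ∈ (A.add B).lopts := by rw [← e]; exact hmem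
    rw [lopts_add] at hg'
    rcases List.mem_append.1 hg' with hg' | hg'
    · obtain ⟨a', ha', rfl⟩ := List.mem_map.1 hg'
      obtain ⟨A'', B'', hA, hB, rfl⟩ := ih rfl
      exact ⟨A'', B'', subgame_trans hA (subgame_of_lopt ha'), hB, rfl⟩
    · obtain ⟨b', hb', rfl⟩ := List.mem_map.1 hg'
      obtain ⟨A'', B'', hA, hB, rfl⟩ := ih rfl
      exact ⟨A'', B'', hA, subgame_trans hB (subgame_of_lopt hb'), rfl⟩
  | @right G' L R hmem hsub ih =>
    intro A B e
    have hg' : G' ∈ (A.add B).ropts := by rw [← e]; exact hmem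
    rw [ropts_add] at hg'
    rcases List.mem_append.1 hg' with hg' | hg'
    · obtain ⟨a', ha', rfl⟩ := List.mem_map.1 hg'
      obtain ⟨A'', B'', hA, hB, rfl⟩ := ih rfl
      exact ⟨A'', B'', subgame_trans hA (subgame_of_ropt ha'), hB, rfl⟩
    · obtain ⟨b', hb', rfl⟩ := List.mem_map.1 hg'
      obtain ⟨A'', B'', hA, hB, rfl⟩ := ih rfl
      exact ⟨A'', B'', hA, subgame_trans hB (subgame_of_ropt hb'), rfl⟩

theorem subgame_int_elim {c : ℤ} {B : WT} (h : Subgame B (int c)) : B = int c := subgame_int h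

theorem good_shift {A : WT} (hw : A.Wt) (h : good A) (c : ℤ) : good (A.add (int c)) := by
  intro K hs hwK
  obtain ⟨A', B', hA, hB, rfl⟩ := subgame_add hs rfl
  have hBe : B' = int c := subgame_int_elim hB
  subst hBe
  obtain ⟨p, hp⟩ := hw
  obtain ⟨q, hq⟩ := subgame_wt hA hp
  have hwA' : A'.Wt := ⟨q, hq⟩
  have hq0 : q = false := by
    have := isWT_add A' (int c) hq (IsWT.int c)
    have := isWT_unique this hwK
    simpa using this
  subst hq0
  have hgood := h A' hA hq
  have hout := out_add_int c A' hwA'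
  simp only [Lout, Rout, hout]
  simp only [Lout, Rout] at hgood
  omega

theorem subgame_finite : ∀ (G : WT), {H : WT | Subgame H G}.Finite
  | int n => by
    apply Set.Finite.subset (Set.finite_singleton (int n : WT))
    intro K hK
    simp [subgame_int hK]
  | node L R => by
    have hfin : ∀ g ∈ L ++ R, {H : WT | Subgame H g}.Finite := fun g hg =>
      subgame_finite g
    have : {H : WT | Subgame H (node L R)} ⊆
        insert (node L R) (⋃ g ∈ {x | x ∈ L ++ R}, {H : WT | Subgame H g}) := by
      intro K hK
      cases hK with
      | refl => exact Set.mem_insert _ _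
      | left hmem hsub =>
        refine Set.mem_insert_of_mem _ ?_
        exact Set.mem_biUnion (by simp [hmem]) hsub
      | right hmem hsub =>
        refine Set.mem_insert_of_mem _ ?_
        exact Set.mem_biUnion (by simp [hmem]) hsub
    refine Set.Finite.subset ?_ this
    refine Set.Finite.insert _ ?_
    exact Set.Finite.biUnion (L ++ R).finite_toSet hfin
termination_by G => sizeOf G
decreasing_by
  rcases List.mem_append.1 hg with h | h <;>
    (have := List.sizeOf_lt_of_mem h; simp only [WT.node.sizeOf_spec]; omega)

theorem good_of_gap {G : WT} (hG : G.gap false = ((0 : ℤ) : WithBot ℤ)) : good G := by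
  intro K hs hw
  set S : Set (WithBot ℤ) :=
    {x : WithBot ℤ | ∃ H : WT, Subgame H G ∧ IsWT H false ∧ x = ((H.Rout - H.Lout : ℤ) : WithBot ℤ)}
    with hSdef
  have hmem : ((K.Rout - K.Lout : ℤ) : WithBot ℤ) ∈ S := ⟨K, hs, hw, rfl⟩
  have hbdd : BddAbove S := by
    have hsub : S ⊆ (fun H : WT => ((H.Rout - H.Lout : ℤ) : WithBot ℤ)) '' {H | Subgame H G} := by
      rintro x ⟨H, hH, _, rfl⟩
      exact ⟨H, hH, rfl⟩
    exact (((subgame_finite G).image _).subset hsub).bddAbove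
  have hle : ((K.Rout - K.Lout : ℤ) : WithBot ℤ) ≤ G.gap false := le_csSup hbdd hmem
  rw [hG] at hle
  have := WithBot.coe_le_coe.1 hle
  omega

/-! ### outcome bounds via options -/

theorem le_Lout_of_mem : ∀ {W g : WT}, g ∈ W.lopts → g.Rout ≤ W.Lout := by
  intro W g hg
  cases W with
  | int n => simp [lopts] at hg
  | node L R =>
    simp only [Lout, Rout, out_node]
    exact le_lmax (List.mem_map.2 ⟨g, hg, rfl⟩)

theorem Rout_le_of_mem : ∀ {W g : WT}, g ∈ W.ropts → W.Rout ≤ g.Lout := by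
  intro W g hg
  cases W with
  | int n => simp [ropts] at hg
  | node L R =>
    simp only [Lout, Rout, out_node]
    exact lmin_le (List.mem_map.2 ⟨g, hg, rfl⟩)

theorem Lout_le_of_forall {W : WT} {m : ℤ} (hW : ∀ n : ℤ, W ≠ int n)
    (hne : W.lopts ≠ []) (h : ∀ g ∈ W.lopts, g.Rout ≤ m) : W.Lout ≤ m := by
  cases W with
  | int n => exact absurd rfl (hW n)
  | node L R =>
    simp only [Lout, out_node]
    refine lmax_le (by simpa [lopts] using hne) ?_
    intro a ha
    obtain ⟨g, hg, rfl⟩ := List.mem_map.1 ha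
    exact h g hg

theorem le_Rout_of_forall {W : WT} {m : ℤ} (hW : ∀ n : ℤ, W ≠ int n)
    (hne : W.ropts ≠ []) (h : ∀ g ∈ W.ropts, m ≤ g.Lout) : m ≤ W.Rout := by
  cases W with
  | int n => exact absurd rfl (hW n)
  | node L R =>
    simp only [Rout, out_node]
    refine le_lmin (by simpa [ropts] using hne) ?_
    intro a ha
    obtain ⟨g, hg, rfl⟩ := List.mem_map.1 ha
    exact h g hg

theorem Lout_mem {W : WT} (hW : ∀ n : ℤ, W ≠ int n) (hne : W.lopts ≠ []) :
    ∃ g ∈ W.lopts, W.Lout = g.Rout := by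
  cases W with
  | int n => exact absurd rfl (hW n)
  | node L R =>
    simp only [Lout, out_node]
    have := lmax_mem (l := L.map (fun g => g.out.2)) (by simpa [lopts] using hne)
    obtain ⟨g, hg, he⟩ := List.mem_map.1 this
    exact ⟨g, hg, he.symm⟩

theorem add_ne_int {G H : WT} (h : ∀ m n : ℤ, G = int m → H = int n → False) :
    ∀ k : ℤ, G.add H ≠ int k := by
  intro k e
  obtain ⟨a, b, ha, hb⟩ := add_eq_int e
  exact h a b ha hb

theorem Lout_add_int {X : WT} (hw : X.Wt) (c : ℤ) : (X.add (int c)).Lout = c + X.Lout := by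
  simp [Lout, out_add_int c X hw]

theorem Rout_add_int {X : WT} (hw : X.Wt) (c : ℤ) : (X.add (int c)).Rout = c + X.Rout := by
  simp [Rout, out_add_int c X hw]

theorem Lout_int_add {X : WT} (hw : X.Wt) (c : ℤ) : ((int c).add X).Lout = c + X.Lout := by
  simp [Lout, out_int_add c X hw]

theorem Rout_int_add {X : WT} (hw : X.Wt) (c : ℤ) : ((int c).add X).Rout = c + X.Rout := by
  simp [Rout, out_int_add c X hw]

/-! ### the mirror lemma -/

theorem M0 : ∀ (A : WT), A.Wt → 0 ≤ (A.add A.neg).Rout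
  | int a, _ => by
    rw [neg_int, add_int_int, Rout_int]
    omega
  | node L R, hw => by
    have hA : (node L R : WT).neg = node (R.map neg) (L.map neg) := neg_node L R
    have hcond : ∀ m n : ℤ, (node L R : WT) = int m → (node L R : WT).neg = int n → False := by
      rw [hA]; intro _ _ hh; cases hh
    refine le_Rout_of_forall (add_ne_int hcond) ?_ ?_
    · rw [ropts_add]
      have := wt_node_ropts_ne hw
      simp only [ne_eq, List.append_eq_nil_iff, List.map_eq_nil_iff, ropts]
      tauto
    · intro g hg
      rw [ropts_add] at hg
      rcases List.mem_append.1 hg with hg | hg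
      · -- g = a_r.add (neg A), a_r ∈ R
        obtain ⟨ar, har, rfl⟩ := List.mem_map.1 hg
        have hmem : ar.add ar.neg ∈ (ar.add (node L R).neg).lopts := by
          rw [lopts_add, lopts_neg]
          refine List.mem_append.2 (Or.inr ?_)
          simp only [List.map_map, List.mem_map, Function.comp_apply]
          exact ⟨ar, by simpa [ropts] using har, rfl⟩
        have h1 := le_Lout_of_mem hmem
        have h2 := M0 ar (wt_ropt hw (by simpa [ropts] using har))
        omega
      · -- g = A.add (neg a_l), a_l ∈ L
        obtain ⟨w, hw', rfl⟩ := List.mem_map.1 hg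
        rw [ropts_neg] at hw'
        obtain ⟨al, hal, rfl⟩ := List.mem_map.1 hw'
        have hmem : al.add al.neg ∈ ((node L R).add al.neg).lopts := by
          rw [lopts_add]
          refine List.mem_append.2 (Or.inl ?_)
          exact List.mem_map.2 ⟨al, by simpa [lopts] using hal, rfl⟩
        have h1 := le_Lout_of_mem hmem
        have h2 := M0 al (wt_lopt hw (by simpa [lopts] using hal))
        omega
termination_by A _ => sizeOf A
decreasing_by
  all_goals
    first
      | (exact sizeOf_lt_of_mem_ropts har)
      | (exact sizeOf_lt_of_mem_lopts hal)

theorem L0 (A : WT) (hw : A.Wt) : (A.add A.neg).Lout ≤ 0 := by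
  have h := M0 A.neg (wt_neg hw)
  have e : (A.add A.neg).neg = A.neg.add A.neg.neg := neg_add A A.neg
  have e2 : ((A.add A.neg).neg).Rout = -(A.add A.neg).Lout := by
    simp [Rout, Lout, out_neg]
  rw [e] at e2
  omega

/-! ### the main comparison theorem -/

theorem isWT_true_ne_int {K : WT} (h : IsWT K true) : ∀ n : ℤ, K ≠ int n := by
  intro n e
  subst e
  exact absurd (isWT_int_elim h) (by simp)

theorem wt_lopts_ne {K : WT} (hw : K.Wt) (h : ∀ n : ℤ, K ≠ int n) : K.lopts ≠ [] := by
  cases K with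
  | int n => exact absurd rfl (h n)
  | node L R => exact wt_node_lopts_ne hw

theorem wt_ropts_ne {K : WT} (hw : K.Wt) (h : ∀ n : ℤ, K ≠ int n) : K.ropts ≠ [] := by
  cases K with
  | int n => exact absurd rfl (h n)
  | node L R => exact wt_node_ropts_ne hw

theorem MT : ∀ (K X : WT), K.Wt → good K → X.Wt →
    ((IsWT K false → 0 ≤ K.Rout → X.Lout ≤ (K.add X).Lout ∧ X.Rout ≤ (K.add X).Rout) ∧
     (IsWT K true → 0 ≤ K.Lout → X.Rout ≤ (K.add X).Lout)) := by
  intro K X hwK hgK hwX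
  constructor
  · -- even case
    intro hKe hR
    by_cases hKint : ∃ m : ℤ, K = int m
    · obtain ⟨m, rfl⟩ := hKint
      have hm : (0 : ℤ) ≤ m := by rwa [Rout_int] at hR
      rw [Lout_int_add hwX, Rout_int_add hwX]
      omega
    · have hKne' : ∀ n : ℤ, K ≠ int n := fun n e => hKint ⟨n, e⟩
      have hKcond : ∀ m n : ℤ, K = int m → X = int n → False := fun m n hm _ => hKne' m hm
      have hKne := add_ne_int hKcond
      constructor
      · -- L part
        by_cases hXint : ∃ n : ℤ, X = int n
        · obtain ⟨n, rfl⟩ := hXint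
          rw [Lout_add_int hwK n, Lout_int]
          have hRL := hgK K (Subgame.refl _) hKe
          omega
        · have hXne : ∀ n : ℤ, X ≠ int n := fun n e => hXint ⟨n, e⟩
          obtain ⟨x, hx, hxe⟩ := Lout_mem hXne (wt_lopts_ne hwX hXne)
          have hmem : K.add x ∈ (K.add X).lopts := by
            rw [lopts_add]
            exact List.mem_append.2 (Or.inr (List.mem_map.2 ⟨x, hx, rfl⟩))
          have h1 := le_Lout_of_mem hmem
          have h2 := ((MT K x hwK hgK (wt_lopt hwX hx)).1 hKe hR).2
          have h3 := le_Lout_of_mem hx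
          omega
      · -- R part
        refine le_Rout_of_forall hKne ?_ ?_
        · rw [ropts_add]
          have := wt_ropts_ne hwK hKne'
          simp only [ne_eq, List.append_eq_nil_iff, List.map_eq_nil_iff]
          tauto
        · intro g hg
          rw [ropts_add] at hg
          rcases List.mem_append.1 hg with hg | hg
          · obtain ⟨k', hk', rfl⟩ := List.mem_map.1 hg
            have hodd : IsWT k' true := by
              have := isWT_ropt hKe hk'
              simpa using this
            have hwk' : k'.Wt := ⟨_, hodd⟩
            have hLk' : 0 ≤ k'.Lout := le_trans hR (Rout_le_of_mem hk')
            exact (MT k' X hwk' (good_subgame hgK (subgame_of_ropt hk')) hwX).2 hodd hLk'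
          · obtain ⟨x', hx', rfl⟩ := List.mem_map.1 hg
            have h1 := ((MT K x' hwK hgK (wt_ropt hwX hx')).1 hKe hR).1
            have h2 := Rout_le_of_mem hx'
            omega
  · -- odd case
    intro hKo hL
    have hKne' : ∀ n : ℤ, K ≠ int n := isWT_true_ne_int hKo
    obtain ⟨k, hk, hke⟩ := Lout_mem hKne' (wt_lopts_ne hwK hKne')
    have hkeven : IsWT k false := by
      have := isWT_lopt hKo hk
      simpa using this
    have hRk : 0 ≤ k.Rout := by rw [← hke]; exact hL
    have h2 := ((MT k X ⟨_, hkeven⟩ (good_subgame hgK (subgame_of_lopt hk)) hwX).1 hkeven hRk).2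
    have hmem : k.add X ∈ (K.add X).lopts := by
      rw [lopts_add]
      exact List.mem_append.2 (Or.inl (List.mem_map.2 ⟨k, hk, rfl⟩))
    have h1 := le_Lout_of_mem hmem
    omega
termination_by K X => sizeOf K + sizeOf X
decreasing_by
  all_goals
    first
      | (have := sizeOf_lt_of_mem_lopts hx; omega)
      | (have := sizeOf_lt_of_mem_ropts hk'; omega)
      | (have := sizeOf_lt_of_mem_ropts hx'; omega)
      | (have := sizeOf_lt_of_mem_lopts hk; omega)

theorem MT_even (K X : WT) (hwK : K.Wt) (hgK : good K) (hwX : X.Wt)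
    (hKe : IsWT K false) (hR : 0 ≤ K.Rout) :
    X.Lout ≤ (K.add X).Lout ∧ X.Rout ≤ (K.add X).Rout :=
  (MT K X hwK hgK hwX).1 hKe hR

theorem MT_odd (K X : WT) (hwK : K.Wt) (hgK : good K) (hwX : X.Wt)
    (hKo : IsWT K true) (hL : 0 ≤ K.Lout) : X.Rout ≤ (K.add X).Lout :=
  (MT K X hwK hgK hwX).2 hKo hL

theorem MT_even_dual (K X : WT) (hwK : K.Wt) (hgK : good K) (hwX : X.Wt)
    (hKe : IsWT K false) (hL : K.Lout ≤ 0) :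
    (K.add X).Lout ≤ X.Lout ∧ (K.add X).Rout ≤ X.Rout := by
  have hRn : 0 ≤ K.neg.Rout := by
    simp only [Rout, out_neg]
    simp only [Lout] at hL
    omega
  have h := MT_even K.neg X.neg (wt_neg hwK) (good_neg hgK) (wt_neg hwX) (isWT_neg hKe) hRn
  have e : K.neg.add X.neg = (K.add X).neg := (neg_add K X).symm
  rw [e] at h
  obtain ⟨h1, h2⟩ := h
  simp only [Lout, Rout, out_neg] at h1 h2
  simp only [Lout, Rout]
  omega

theorem MT_odd_dual (K X : WT) (hwK : K.Wt) (hgK : good K) (hwX : X.Wt)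
    (hKo : IsWT K true) (hR : K.Rout ≤ 0) : (K.add X).Rout ≤ X.Lout := by
  have hLn : 0 ≤ K.neg.Lout := by
    simp only [Lout, out_neg]
    simp only [Rout] at hR
    omega
  have h := MT_odd K.neg X.neg (wt_neg hwK) (good_neg hgK) (wt_neg hwX) (isWT_neg hKo) hLn
  have e : K.neg.add X.neg = (K.add X).neg := (neg_add K X).symm
  rw [e] at h
  simp only [Lout, Rout, out_neg] at h
  simp only [Lout, Rout]
  omega

/-! ### translation bounds and goodness of sums -/

theorem U_even (A X : WT) (hwA : A.Wt) (hgA : good A) (hwX : X.Wt) (hAe : IsWT A false) :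
    A.Rout + X.Lout ≤ (A.add X).Lout ∧ A.Rout + X.Rout ≤ (A.add X).Rout := by
  obtain ⟨c, hc⟩ : ∃ c : ℤ, c = -A.Rout := ⟨_, rfl⟩
  have hwK : (A.add (int c)).Wt := wt_add hwA (wt_int c)
  have hgK : good (A.add (int c)) := good_shift hwA hgA c
  have hKe : IsWT (A.add (int c)) false := by
    simpa using isWT_add A (int c) hAe (IsWT.int c)
  have hRK : 0 ≤ (A.add (int c)).Rout := by
    rw [Rout_add_int hwA c, hc]
    omega
  have h := MT_even (A.add (int c)) X hwK hgK hwX hKe hRK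
  have eo : ((A.add (int c)).add X).out = (c + (A.add X).out.1, c + (A.add X).out.2) := by
    rw [add_assoc A (int c) X, out_swap3 A (int c) X, out_int_add c (A.add X) (wt_add hwA hwX)]
  obtain ⟨h1, h2⟩ := h
  simp only [Lout, Rout, eo] at h1 h2 ⊢
  have hc' : c = -A.out.2 := hc
  omega

theorem U_odd (C X : WT) (hwC : C.Wt) (hgC : good C) (hwX : X.Wt) (hCo : IsWT C true) :
    C.Lout + X.Rout ≤ (C.add X).Lout := by
  obtain ⟨c, hc⟩ : ∃ c : ℤ, c = -C.Lout := ⟨_, rfl⟩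
  have hwK : (C.add (int c)).Wt := wt_add hwC (wt_int c)
  have hgK : good (C.add (int c)) := good_shift hwC hgC c
  have hKo : IsWT (C.add (int c)) true := by
    simpa using isWT_add C (int c) hCo (IsWT.int c)
  have hLK : 0 ≤ (C.add (int c)).Lout := by
    rw [Lout_add_int hwC c, hc]
    omega
  have h := MT_odd (C.add (int c)) X hwK hgK hwX hKo hLK
  have eo : ((C.add (int c)).add X).out = (c + (C.add X).out.1, c + (C.add X).out.2) := by
    rw [add_assoc C (int c) X, out_swap3 C (int c) X, out_int_add c (C.add X) (wt_add hwC hwX)]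
  simp only [Lout, Rout, eo] at h ⊢
  have hc' : c = -C.out.1 := hc
  omega

theorem D_even (A X : WT) (hwA : A.Wt) (hgA : good A) (hwX : X.Wt) (hAe : IsWT A false) :
    (A.add X).Lout ≤ A.Lout + X.Lout ∧ (A.add X).Rout ≤ A.Lout + X.Rout := by
  have h := U_even A.neg X.neg (wt_neg hwA) (good_neg hgA) (wt_neg hwX) (isWT_neg hAe)
  rw [(neg_add A X).symm] at h
  obtain ⟨h1, h2⟩ := h
  simp only [Lout, Rout, out_neg] at h1 h2
  simp only [Lout, Rout]
  omega

theorem D_odd (C X : WT) (hwC : C.Wt) (hgC : good C) (hwX : X.Wt) (hCo : IsWT C true) :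
    (C.add X).Rout ≤ C.Rout + X.Lout := by
  have h := U_odd C.neg X.neg (wt_neg hwC) (good_neg hgC) (wt_neg hwX) (isWT_neg hCo)
  rw [(neg_add C X).symm] at h
  simp only [Lout, Rout, out_neg] at h
  simp only [Lout, Rout]
  omega

theorem GE {A B : WT} (hwA : A.Wt) (hwB : B.Wt) (hgA : good A) (hgB : good B)
    (hAe : IsWT A false) (hBe : IsWT B false) : (A.add B).Rout ≤ (A.add B).Lout := by
  have h1 := (D_even A B hwA hgA hwB hAe).2
  have h2 := (U_even B A hwB hgB hwA hBe).1
  have h3 : (B.add A).out = (A.add B).out := out_add_comm B A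
  simp only [Lout, Rout, h3] at h1 h2 ⊢
  omega

theorem GO {C D : WT} (hwC : C.Wt) (hwD : D.Wt) (hgC : good C) (hgD : good D)
    (hCo : IsWT C true) (hDo : IsWT D true) : (C.add D).Rout ≤ (C.add D).Lout := by
  have h1 := D_odd C D hwC hgC hwD hCo
  have h2 := U_odd D C hwD hgD hwC hDo
  have h3 : (D.add C).out = (C.add D).out := out_add_comm D C
  simp only [Lout, Rout, h3] at h1 h2 ⊢
  omega

theorem good_add {A B : WT} (hwA : A.Wt) (hwB : B.Wt) (hgA : good A) (hgB : good B) :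
    good (A.add B) := by
  intro K hs hwK
  obtain ⟨A', B', hA, hB, rfl⟩ := subgame_add hs rfl
  obtain ⟨pA, hpA⟩ := hwA
  obtain ⟨pB, hpB⟩ := hwB
  obtain ⟨p, hp⟩ := subgame_wt hA hpA
  obtain ⟨q, hq⟩ := subgame_wt hB hpB
  have hxor : xor p q = false := isWT_unique (isWT_add A' B' hp hq) hwK
  have hpq : q = p := by
    cases p <;> cases q <;> simp_all
  subst hpq
  have hgA' := good_subgame hgA hA
  have hgB' := good_subgame hgB hB
  cases q with
  | false => exact GE ⟨_, hp⟩ ⟨_, hq⟩ hgA' hgB' hp hq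
  | true => exact GO ⟨_, hp⟩ ⟨_, hq⟩ hgA' hgB' hp hq

/-! ### invertibility and the comparison theorem -/

theorem isWT_sub_self {G : WT} {p : Bool} (hp : IsWT G p) : IsWT (G.add G.neg) false := by
  have := isWT_add G G.neg hp (isWT_neg hp)
  simpa using this

theorem equiv0 {G : WT} (hw : G.Wt) (hg : good G) : Equiv (G.add G.neg) (int 0) := by
  intro X hwX
  obtain ⟨p, hp⟩ := hw
  have hwG : G.Wt := ⟨p, hp⟩
  have hwK : (G.add G.neg).Wt := wt_add hwG (wt_neg hwG)
  have hgK : good (G.add G.neg) := good_add hwG (wt_neg hwG) hg (good_neg hg)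
  have hKe : IsWT (G.add G.neg) false := isWT_sub_self hp
  have hR := M0 G hwG
  have hL := L0 G hwG
  have h1 := MT_even (G.add G.neg) X hwK hgK hwX hKe hR
  have h2 := MT_even_dual (G.add G.neg) X hwK hgK hwX hKe hL
  have e0L := Lout_int_add hwX 0
  have e0R := Rout_int_add hwX 0
  constructor
  · rw [e0L]; omega
  · rw [e0R]; omega

/-- The key rearrangement: `(G - H) + (H + X)` has the same outcomes as `(H - H) + (G + X)`. -/
theorem rearrange (G H X : WT) :
    ((G.add H.neg).add (H.add X)).out = ((H.add H.neg).add (G.add X)).out := by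
  rw [add_assoc G H.neg (H.add X)]
  rw [out_swap G H.neg H X]
  rw [out_swap3 G H (H.neg.add X)]
  rw [out_swap H G H.neg X]
  rw [← add_assoc H H.neg (G.add X)]

theorem ge_of_R {G H : WT} (hwG : G.Wt) (hwH : H.Wt) (hgG : good G) (hgH : good H)
    (hpar : SamePar G H) (hR : 0 ≤ (G.add H.neg).Rout) : Ge G H := by
  intro X hwX
  obtain ⟨p, hpG, hpH⟩ := hpar
  have hwK : (G.add H.neg).Wt := wt_add hwG (wt_neg hwH)
  have hgK : good (G.add H.neg) := good_add hwG (wt_neg hwH) hgG (good_neg hgH)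
  have hKe : IsWT (G.add H.neg) false := by
    have := isWT_add G H.neg hpG (isWT_neg hpH)
    simpa using this
  have h := MT_even (G.add H.neg) (H.add X) hwK hgK (wt_add hwH hwX) hKe hR
  have hre := rearrange G H X
  have heq := equiv0 hwH hgH (G.add X) (wt_add hwG hwX)
  have e0L := Lout_int_add (wt_add hwG hwX) 0
  have e0R := Rout_int_add (wt_add hwG hwX) 0
  obtain ⟨hq1, hq2⟩ := heq
  rw [e0L] at hq1
  rw [e0R] at hq2
  obtain ⟨h1, h2⟩ := h
  simp only [Lout, Rout, hre] at h1 h2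
  simp only [Lout, Rout] at hq1 hq2 ⊢
  omega

/-- Outcomes of the odd-tempered switch `⟨⟨-n|-n⟩ | ⟨n|n⟩⟩`... actually we use
`Xn = node [node [int (-n)] [int (-n)]] [node [int n] [int n]]`, an even-tempered game
with `L = -n` and `R = n`. -/
def switch (n : ℤ) : WT := node [node [int (-n)] [int (-n)]] [node [int n] [int n]]

theorem switch_wt (n : ℤ) : IsWT (switch n) false := by
  have h1 : IsWT (node [int (-n)] [int (-n)]) (!false) :=
    IsWT.node (by simp) (by simp)
      (by intro g hg; simp at hg; subst hg; exact IsWT.int _)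
      (by intro g hg; simp at hg; subst hg; exact IsWT.int _)
  have h2 : IsWT (node [int n] [int n]) (!false) :=
    IsWT.node (by simp) (by simp)
      (by intro g hg; simp at hg; subst hg; exact IsWT.int _)
      (by intro g hg; simp at hg; subst hg; exact IsWT.int _)
  have := IsWT.node (L := [node [int (-n)] [int (-n)]]) (R := [node [int n] [int n]])
    (by simp) (by simp)
    (by intro g hg; simp at hg; subst hg; exact h1)
    (by intro g hg; simp at hg; subst hg; exact h2)
  simpa [switch] using this

theorem switch_out (n : ℤ) : (switch n).out = (-n, n) := by
  have hin : (node [int (-n)] [int (-n)] : WT).out = (-n, -n) := by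
    rw [out_node]
    simp [out_int, lmax, lmin]
  have hin2 : (node [int n] [int n] : WT).out = (n, n) := by
    rw [out_node]
    simp [out_int, lmax, lmin]
  rw [switch, out_node]
  simp [hin, hin2, lmax, lmin]

theorem samePar_of_ge {G H : WT} (hwG : G.Wt) (hwH : H.Wt) (hgG : good G) (hgH : good H)
    (hge : Ge G H) : SamePar G H := by
  obtain ⟨p, hp⟩ := hwG
  obtain ⟨q, hq⟩ := hwH
  by_cases hpq : p = q
  · exact ⟨p, hp, hpq ▸ hq⟩
  · exfalso
    have hswt : ∀ n : ℤ, (switch n).Wt := fun n => ⟨false, switch_wt n⟩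
    cases p with
    | false =>
      have hqt : q = true := by cases q <;> simp_all
      subst hqt
      -- G even, H odd
      obtain ⟨n, hn⟩ : ∃ n : ℤ, 2 * n > G.Lout - H.Lout :=
        ⟨(G.Lout - H.Lout).natAbs + 1, by
          have := Int.le_natAbs (a := G.Lout - H.Lout)
          omega⟩
      have hD := (D_even G (switch n) ⟨_, hp⟩ hgG (hswt n) hp).1
      have hU := U_odd H (switch n) ⟨_, hq⟩ hgH (hswt n) hq
      have hcmp := (hge (switch n) (hswt n)).1
      have hout := switch_out n
      simp only [Lout, Rout, hout] at hD hU hcmp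
      simp only [Lout, Rout] at hn
      omega
    | true =>
      have hqt : q = false := by cases q <;> simp_all
      subst hqt
      -- G odd, H even
      obtain ⟨n, hn⟩ : ∃ n : ℤ, 2 * n > G.Rout - H.Rout :=
        ⟨(G.Rout - H.Rout).natAbs + 1, by
          have := Int.le_natAbs (a := G.Rout - H.Rout)
          omega⟩
      have hD := D_odd G (switch n) ⟨_, hp⟩ hgG (hswt n) hp
      have hU := (U_even H (switch n) ⟨_, hq⟩ hgH (hswt n) hq).2
      have hcmp := (hge (switch n) (hswt n)).2
      have hout := switch_out n
      simp only [Lout, Rout, hout] at hD hU hcmp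
      simp only [Lout, Rout] at hn
      omega

theorem R_L_bridge (G H : WT) : (G.add H.neg).Rout = -(H.add G.neg).Lout := by
  have e : (G.add H.neg).neg = G.neg.add H.neg.neg := neg_add G H.neg
  rw [neg_neg] at e
  have h1 : (G.add H.neg).neg.Lout = -(G.add H.neg).Rout := by
    simp [Lout, Rout, out_neg]
  rw [e] at h1
  have h2 : (G.neg.add H).out = (H.add G.neg).out := out_add_comm G.neg H
  simp only [Lout, Rout, h2] at h1
  simp only [Lout, Rout]
  omega

end WT

/-- for G, H ∈ I (gap₀ = 0): G - G ≈ 0, and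
G ≳ H ↔ (R(G - H) ≥ 0 and π(G) = π(H)) ↔ (L(H - G) ≤ 0 and π(G) = π(H)). -/
theorem invertible_comparison (G H : WT) (hG : G.Wt) (hH : H.Wt)
    (hGg : G.gap false = ((0 : ℤ) : WithBot ℤ)) (hHg : H.gap false = ((0 : ℤ) : WithBot ℤ)) :
    WT.Equiv (G.add G.neg) (WT.int 0) ∧
    (WT.Ge G H ↔ (0 ≤ (G.add H.neg).Rout ∧ WT.SamePar G H)) ∧
    (WT.Ge G H ↔ ((H.add G.neg).Lout ≤ 0 ∧ WT.SamePar G H)) := by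
  have hgG := WT.good_of_gap hGg
  have hgH := WT.good_of_gap hHg
  have h2 : WT.Ge G H ↔ (0 ≤ (G.add H.neg).Rout ∧ WT.SamePar G H) := by
    constructor
    · intro hge
      refine ⟨?_, WT.samePar_of_ge hG hH hgG hgH hge⟩
      have h := (hge H.neg (WT.wt_neg hH)).2
      have h0 := WT.M0 H hH
      omega
    · rintro ⟨hR, hpar⟩
      exact WT.ge_of_R hG hH hgG hgH hpar hR
  have hbr := WT.R_L_bridge G H
  refine ⟨WT.equiv0 hG hgG, h2, ?_⟩
  rw [h2]
  constructor
  · rintro ⟨hR, hp⟩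
    exact ⟨by omega, hp⟩
  · rintro ⟨hL, hp⟩
    exact ⟨by omega, hp⟩
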